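/- Let q be a prime power and d ≥ 1 an integer. Let A_1, A_2, A_3 ⊆ 𝔽_q^d satisfy |A_1||A_2| ≥ 100·q^{d+1} and |A_2||A_3| ≥ 100·q^{d+1}. Then for all α_1, α_2 ∈ 𝔽_q^*, the number of triples (x_1, x_2, x_3) ∈ A_1 × A_2 × A_3 with x_1·x_2 = α_1 and x_2·x_3 = α_2 is at least (1/4)·q^{-2}·|A_1||A_2||A_3|; in particular there exist x_1 ∈ A_1, x_2 ∈ A_2, x_3 ∈ A_3 with x_1·x_2 = α_1 and x_2·x_3 = α_2. -/

import Mathlib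

/-- The dot product on `𝔽_q^d`. -/
def dotp {F : Type} [Field F] {d : ℕ} (x y : Fin d → F) : F := ∑ i, x i * y i

set_option linter.unusedSectionVars false
set_option maxHeartbeats 1000000

variable {F : Type} [Field F] [Fintype F] [DecidableEq F] {d : ℕ}

lemma dotp_add_right (a x y : Fin d → F) : dotp a (x + y) = dotp a x + dotp a y := by
  simp [dotp, mul_add, Finset.sum_add_distrib]

lemma dotp_smul_right (a : Fin d → F) (c : F) (x : Fin d → F) :
    dotp a (c • x) = c * dotp a x := by
  simp only [dotp, Pi.smul_apply, smul_eq_mul, Finset.mul_sum]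
  exact Finset.sum_congr rfl fun i _ => by ring

lemma dotp_single (a : Fin d → F) (i : Fin d) (c : F) : dotp a (Pi.single i c) = a i * c := by
  rw [dotp, Finset.sum_eq_single i] <;> simp +contextual [Pi.single_apply]

lemma dotp_comm (a x : Fin d → F) : dotp a x = dotp x a := by
  simp [dotp, mul_comm]

lemma dotp_zero_left (x : Fin d → F) : dotp 0 x = 0 := by simp [dotp]

open Finset in
lemma fiber_card_eq (a v : Fin d → F) (hv : dotp a v = 1) (β γ : F) :
    (Finset.univ.filter fun x => dotp a x = β).card
      = (Finset.univ.filter fun x => dotp a x = γ).card := by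
  apply Finset.card_bij' (fun x _ => x + (γ - β) • v) (fun x _ => x + (β - γ) • v)
  · intro x hx
    simp only [Finset.mem_filter, Finset.mem_univ, true_and] at hx ⊢
    rw [dotp_add_right, dotp_smul_right, hv, hx]; ring
  · intro x hx
    simp only [Finset.mem_filter, Finset.mem_univ, true_and] at hx ⊢
    rw [dotp_add_right, dotp_smul_right, hv, hx]; ring
  · intro x _; ext k; simp; ring
  · intro x _; ext k; simp; ring

lemma hyperplane_card {a : Fin d → F} (ha : a ≠ 0) (α : F) :
    (Finset.univ.filter fun x => dotp a x = α).card * Fintype.card F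
      = Fintype.card F ^ d := by
  obtain ⟨i, hi⟩ := Function.ne_iff.mp ha
  set v : Fin d → F := (a i)⁻¹ • (Pi.single i (1:F) : Fin d → F) with hvdef
  have hv : dotp a v = 1 := by
    rw [hvdef, dotp_smul_right, dotp_single]
    simp at hi
    field_simp
  have h1 : (Finset.univ : Finset (Fin d → F)).card
      = ∑ β : F, (Finset.univ.filter fun x => dotp a x = β).card :=
    Finset.card_eq_sum_card_fiberwise (fun x _ => Finset.mem_univ _)
  have h2 : ∑ β : F, (Finset.univ.filter fun x => dotp a x = β).card
      = Fintype.card F * (Finset.univ.filter fun x => dotp a x = α).card := by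
    rw [Finset.sum_congr rfl fun β _ => fiber_card_eq a v hv β α]
    simp [Finset.sum_const, mul_comm]
  have h3 : (Finset.univ : Finset (Fin d → F)).card = Fintype.card F ^ d := by
    simp [Fintype.card_fun]
  rw [← h3, h1, h2, Nat.mul_comm]

lemma exists_dual_pair {a a' : Fin d → F} (ha : a ≠ 0)
    (hind : ∀ lam : F, a' ≠ lam • a) :
    ∃ v w : Fin d → F, dotp a v = 1 ∧ dotp a' v = 0 ∧ dotp a w = 0 ∧ dotp a' w = 1 := by
  obtain ⟨i, hi⟩ := Function.ne_iff.mp ha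
  simp only [Pi.zero_apply] at hi
  have hb : a' - (a' i / a i) • a ≠ 0 := by
    intro h; exact hind (a' i / a i) (by rwa [sub_eq_zero] at h)
  obtain ⟨j, hj⟩ := Function.ne_iff.mp hb
  have hbj : a' j - (a' i / a i) * a j ≠ 0 := by simpa using hj
  have hD : a i * a' j - a j * a' i ≠ 0 := by
    have : a i * (a' j - (a' i / a i) * a j) = a i * a' j - a j * a' i := by
      field_simp
    rw [← this]
    exact mul_ne_zero hi hbj
  set D := a i * a' j - a j * a' i with hDdef
  refine ⟨(a' j / D) • (Pi.single i (1:F) : Fin d → F)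
        + (- a' i / D) • (Pi.single j (1:F) : Fin d → F),
        (- a j / D) • (Pi.single i (1:F) : Fin d → F)
        + (a i / D) • (Pi.single j (1:F) : Fin d → F), ?_, ?_, ?_, ?_⟩ <;>
    · rw [dotp_add_right, dotp_smul_right, dotp_smul_right, dotp_single, dotp_single]
      field_simp
      ring

lemma fiber2_card_eq (a a' v w : Fin d → F) (hv : dotp a v = 1) (hv' : dotp a' v = 0)
    (hw : dotp a w = 0) (hw' : dotp a' w = 1) (β β' γ γ' : F) :
    (Finset.univ.filter fun x => dotp a x = β ∧ dotp a' x = β').card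
      = (Finset.univ.filter fun x => dotp a x = γ ∧ dotp a' x = γ').card := by
  apply Finset.card_bij' (fun x _ => x + (γ - β) • v + (γ' - β') • w)
    (fun x _ => x + (β - γ) • v + (β' - γ') • w)
  · intro x hx
    simp only [Finset.mem_filter, Finset.mem_univ, true_and] at hx ⊢
    rw [dotp_add_right, dotp_add_right, dotp_smul_right, dotp_smul_right, hv, hw,
      dotp_add_right, dotp_add_right, dotp_smul_right, dotp_smul_right, hv', hw',
      hx.1, hx.2]
    constructor <;> ring
  · intro x hx
    simp only [Finset.mem_filter, Finset.mem_univ, true_and] at hx ⊢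
    rw [dotp_add_right, dotp_add_right, dotp_smul_right, dotp_smul_right, hv, hw,
      dotp_add_right, dotp_add_right, dotp_smul_right, dotp_smul_right, hv', hw',
      hx.1, hx.2]
    constructor <;> ring
  · intro x _; ext k; simp; ring
  · intro x _; ext k; simp; ring

lemma plane_card {a a' : Fin d → F} (ha : a ≠ 0)
    (hind : ∀ lam : F, a' ≠ lam • a) (α α' : F) :
    (Finset.univ.filter fun x => dotp a x = α ∧ dotp a' x = α').card
        * Fintype.card F ^ 2 = Fintype.card F ^ d := by
  obtain ⟨v, w, hv, hv', hw, hw'⟩ := exists_dual_pair ha hind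
  have h1 : (Finset.univ : Finset (Fin d → F)).card
      = ∑ p : F × F, (Finset.univ.filter fun x => (dotp a x, dotp a' x) = p).card :=
    Finset.card_eq_sum_card_fiberwise (fun x _ => Finset.mem_univ _)
  have h2 : ∀ p : F × F, (Finset.univ.filter fun x => (dotp a x, dotp a' x) = p).card
      = (Finset.univ.filter fun x => dotp a x = α ∧ dotp a' x = α').card := by
    intro p
    have : (Finset.univ.filter fun x => (dotp a x, dotp a' x) = p)
        = (Finset.univ.filter fun x => dotp a x = p.1 ∧ dotp a' x = p.2) := by
      apply Finset.filter_congr; intro x _; simp [Prod.ext_iff]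
    rw [this]
    exact fiber2_card_eq a a' v w hv hv' hw hw' p.1 p.2 α α'
  have h3 : (Finset.univ : Finset (Fin d → F)).card = Fintype.card F ^ d := by
    simp [Fintype.card_fun]
  rw [← h3, h1, Finset.sum_congr rfl fun p _ => h2 p, Finset.sum_const]
  simp [Fintype.card_prod, mul_comm, sq]

lemma dotp_smul_left (c : F) (a x : Fin d → F) : dotp (c • a) x = c * dotp a x := by
  rw [dotp_comm, dotp_smul_right, dotp_comm]

lemma swap_count (A : Finset (Fin d → F)) (α : F) :
    ∑ x : Fin d → F, (A.filter fun a => dotp a x = α).card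
      = ∑ a ∈ A, (Finset.univ.filter fun x => dotp a x = α).card := by
  simp only [Finset.card_filter]
  rw [Finset.sum_comm]

lemma first_moment (A : Finset (Fin d → F)) {α : F} (hα : α ≠ 0) :
    (∑ x : Fin d → F, (A.filter fun a => dotp a x = α).card) * Fintype.card F
      = (A.filter fun a => a ≠ 0).card * Fintype.card F ^ d := by
  rw [swap_count]
  rw [← Finset.sum_filter_of_ne (p := fun a => a ≠ 0)
    (f := fun a => (Finset.univ.filter fun x => dotp a x = α).card)]
  · rw [Finset.sum_mul]
    rw [Finset.sum_congr rfl fun a ha => hyperplane_card (Finset.mem_filter.mp ha).2 α]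
    simp [Finset.sum_const, mul_comm]
  · intro a _ hne
    rcases eq_or_ne a 0 with rfl | h
    · simp [dotp_zero_left, Ne.symm hα] at hne
    · exact h

lemma pair_count_le {a a' : Fin d → F} (ha : a ≠ 0) (ha' : a' ≠ 0) {α : F} (hα : α ≠ 0) :
    ((Finset.univ.filter fun x => dotp a x = α ∧ dotp a' x = α).card : ℝ)
      ≤ if a' = a then (Fintype.card F:ℝ)^d / Fintype.card F
        else (Fintype.card F:ℝ)^d / (Fintype.card F:ℝ)^2 := by
  have hq : (0:ℝ) < Fintype.card F := by
    exact_mod_cast Fintype.card_pos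
  split_ifs with heq
  · subst heq
    have := hyperplane_card (F := F) ha' α
    have hcast : ((Finset.univ.filter fun x => dotp a' x = α).card : ℝ) * Fintype.card F
        = (Fintype.card F:ℝ)^d := by exact_mod_cast congrArg Nat.cast this
    simp only [and_self]
    rw [le_div_iff₀ hq]
    linarith [hcast]
  · by_cases hdep : ∃ lam : F, a' = lam • a
    · obtain ⟨lam, rfl⟩ := hdep
      have : (Finset.univ.filter fun x => dotp a x = α ∧ dotp (lam • a) x = α) = ∅ := by
        rw [Finset.filter_eq_empty_iff]
        rintro x - ⟨h1, h2⟩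
        rw [dotp_smul_left, h1] at h2
        have hlam : lam = 1 := by
          have : lam * α = 1 * α := by rw [h2, one_mul]
          exact mul_right_cancel₀ hα this
        exact heq (by rw [hlam, one_smul])
      rw [this]
      simp
      positivity
    · push_neg at hdep
      have := plane_card ha hdep α α
      have hcast : ((Finset.univ.filter fun x => dotp a x = α ∧ dotp a' x = α).card : ℝ)
          * (Fintype.card F:ℝ)^2 = (Fintype.card F:ℝ)^d := by exact_mod_cast congrArg Nat.cast this
      rw [le_div_iff₀ (by positivity)]
      linarith [hcast]

lemma restrict_filter (A : Finset (Fin d → F)) {α : F} (hα : α ≠ 0) (x : Fin d → F) :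
    A.filter (fun a => dotp a x = α)
      = (A.filter fun a => a ≠ 0).filter (fun a => dotp a x = α) := by
  ext a
  simp only [Finset.mem_filter]
  constructor
  · rintro ⟨hA, hP⟩
    refine ⟨⟨hA, ?_⟩, hP⟩
    rintro rfl
    rw [dotp_zero_left] at hP
    exact hα hP.symm
  · rintro ⟨⟨hA, _⟩, hP⟩
    exact ⟨hA, hP⟩

lemma second_moment (A : Finset (Fin d → F)) {α : F} (hα : α ≠ 0) :
    ∑ x : Fin d → F, ((A.filter fun a => dotp a x = α).card : ℝ)^2
      ≤ ((A.filter fun a => a ≠ 0).card : ℝ) * (Fintype.card F:ℝ)^d / Fintype.card F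
        + ((A.filter fun a => a ≠ 0).card : ℝ)^2 * (Fintype.card F:ℝ)^d
            / (Fintype.card F:ℝ)^2 := by
  set q : ℝ := (Fintype.card F : ℝ) with hqdef
  set A' := A.filter (fun a => a ≠ 0) with hA'
  have hq : (0:ℝ) < q := by rw [hqdef]; exact_mod_cast Fintype.card_pos
  have hN : ∀ x : Fin d → F, ((A.filter fun a => dotp a x = α).card : ℝ)
      = ∑ a ∈ A', (if dotp a x = α then (1:ℝ) else 0) := by
    intro x
    rw [restrict_filter A hα x, Finset.card_filter]
    push_cast
    rfl
  have step1 : ∑ x : Fin d → F, ((A.filter fun a => dotp a x = α).card : ℝ)^2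
      = ∑ a ∈ A', ∑ a' ∈ A',
          ((Finset.univ.filter fun x => dotp a x = α ∧ dotp a' x = α).card : ℝ) := by
    have : ∀ x : Fin d → F, ((A.filter fun a => dotp a x = α).card : ℝ)^2
        = ∑ a ∈ A', ∑ a' ∈ A',
            (if dotp a x = α ∧ dotp a' x = α then (1:ℝ) else 0) := by
      intro x
      rw [hN x, sq, Finset.sum_mul_sum]
      refine Finset.sum_congr rfl fun a _ => Finset.sum_congr rfl fun a' _ => ?_
      by_cases h1 : dotp a x = α <;> by_cases h2 : dotp a' x = α <;> simp [h1, h2]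
    rw [Finset.sum_congr rfl fun x _ => this x, Finset.sum_comm]
    refine Finset.sum_congr rfl fun a _ => ?_
    rw [Finset.sum_comm]
    refine Finset.sum_congr rfl fun a' _ => ?_
    rw [Finset.card_filter]
    push_cast
    rfl
  rw [step1]
  have hbound : ∀ a ∈ A', ∑ a' ∈ A',
      ((Finset.univ.filter fun x => dotp a x = α ∧ dotp a' x = α).card : ℝ)
        ≤ (A'.card : ℝ) * (q^d / q^2) + q^d / q := by
    intro a ha
    have haz : a ≠ 0 := (Finset.mem_filter.mp ha).2
    have : ∀ a' ∈ A',
        ((Finset.univ.filter fun x => dotp a x = α ∧ dotp a' x = α).card : ℝ)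
          ≤ q^d / q^2 + (if a' = a then q^d / q else 0) := by
      intro a' ha'
      have haz' : a' ≠ 0 := (Finset.mem_filter.mp ha').2
      have := pair_count_le haz haz' hα
      split_ifs at this ⊢ with h
      · have hqq : q^d / q^2 ≥ 0 := by positivity
        linarith
      · linarith [this]
    calc ∑ a' ∈ A', ((Finset.univ.filter fun x => dotp a x = α ∧ dotp a' x = α).card : ℝ)
        ≤ ∑ a' ∈ A', (q^d / q^2 + (if a' = a then q^d / q else 0)) :=
          Finset.sum_le_sum this
      _ = (A'.card : ℝ) * (q^d / q^2) + q^d / q := by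
          rw [Finset.sum_add_distrib, Finset.sum_const, Finset.sum_ite_eq' A' a fun _ => q^d/q]
          simp [ha, mul_comm]
  calc ∑ a ∈ A', ∑ a' ∈ A',
      ((Finset.univ.filter fun x => dotp a x = α ∧ dotp a' x = α).card : ℝ)
      ≤ ∑ a ∈ A', ((A'.card : ℝ) * (q^d / q^2) + q^d / q) := Finset.sum_le_sum hbound
    _ = (A'.card : ℝ) * ((A'.card : ℝ) * (q^d / q^2) + q^d / q) := by
        rw [Finset.sum_const, nsmul_eq_mul]
    _ ≤ (A'.card : ℝ) * q^d / q + (A'.card : ℝ)^2 * q^d / q^2 := by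
        rw [mul_add]
        ring_nf
        linarith [le_refl (0:ℝ)]

lemma variance_bound (A : Finset (Fin d → F)) {α : F} (hα : α ≠ 0) :
    ∑ x : Fin d → F, (((A.filter fun a => dotp a x = α).card : ℝ)
        - ((A.filter fun a => a ≠ 0).card : ℝ) / Fintype.card F)^2
      ≤ ((A.filter fun a => a ≠ 0).card : ℝ) * (Fintype.card F:ℝ)^d / Fintype.card F := by
  set q : ℝ := (Fintype.card F : ℝ) with hqdef
  have hq : (0:ℝ) < q := by rw [hqdef]; exact_mod_cast Fintype.card_pos
  set m : ℝ := ((A.filter fun a => a ≠ 0).card : ℝ) with hmdef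
  set N : (Fin d → F) → ℝ := fun x => ((A.filter fun a => dotp a x = α).card : ℝ) with hNdef
  have hS1 : ∑ x : Fin d → F, N x = m * q^d / q := by
    have := first_moment A hα
    have hcast : (∑ x : Fin d → F, N x) * q = m * q^d := by
      rw [hNdef, hmdef, hqdef]
      beta_reduce
      exact_mod_cast congrArg Nat.cast this
    field_simp
    linarith [hcast]
  have hS2 : ∑ x : Fin d → F, (N x)^2 ≤ m * q^d / q + m^2 * q^d / q^2 :=
    second_moment A hα
  have hcard : ((Finset.univ : Finset (Fin d → F)).card : ℝ) = q^d := by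
    rw [hqdef]; simp [Fintype.card_fun]
  have hexp : ∑ x : Fin d → F, (N x - m/q)^2
      = (∑ x : Fin d → F, (N x)^2) - 2*(m/q)*(∑ x : Fin d → F, N x)
        + q^d * (m/q)^2 := by
    have : ∀ x : Fin d → F, (N x - m/q)^2 = (N x)^2 - 2*(m/q)*(N x) + (m/q)^2 := by
      intro x; ring
    rw [Finset.sum_congr rfl fun x _ => this x, Finset.sum_add_distrib,
      Finset.sum_sub_distrib, ← Finset.mul_sum, Finset.sum_const, ← hcard]
    simp [nsmul_eq_mul]
  have hid : 2*(m/q)*(m*q^d/q) - q^d*(m/q)^2 = m^2*q^d/q^2 := by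
    field_simp
    ring
  rw [hexp, hS1]
  linarith

lemma bad_card (A S : Finset (Fin d → F)) {α : F} (hα : α ≠ 0)
    (hm : 0 < ((A.filter fun a => a ≠ 0).card : ℝ)) :
    ((S.filter fun x => ((A.filter fun a => dotp a x = α).card : ℝ)
        < 3/5 * ((A.filter fun a => a ≠ 0).card : ℝ) / Fintype.card F).card : ℝ)
        * (4 * ((A.filter fun a => a ≠ 0).card : ℝ))
      ≤ 25 * (Fintype.card F:ℝ)^d * Fintype.card F := by
  set q : ℝ := (Fintype.card F : ℝ) with hqdef
  have hq : (0:ℝ) < q := by rw [hqdef]; exact_mod_cast Fintype.card_pos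
  set m : ℝ := ((A.filter fun a => a ≠ 0).card : ℝ) with hmdef
  set N : (Fin d → F) → ℝ := fun x => ((A.filter fun a => dotp a x = α).card : ℝ) with hNdef
  set Bad := S.filter fun x => N x < 3/5 * m / q with hBad
  have hpt : ∀ x ∈ Bad, (2/5 * m / q)^2 ≤ (N x - m/q)^2 := by
    intro x hx
    have hxlt : N x < 3/5 * m / q := (Finset.mem_filter.mp hx).2
    have hN0 : 0 ≤ N x := Nat.cast_nonneg _
    have hmu : 0 < m / q := by positivity
    rw [mul_div_assoc] at hxlt ⊢
    nlinarith [mul_pos (show (0:ℝ) < 3/5*(m/q) - N x by linarith)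
      (show (0:ℝ) < 7/5*(m/q) - N x by linarith)]
  have hlb : (Bad.card : ℝ) * (2/5 * m / q)^2 ≤ ∑ x ∈ Bad, (N x - m/q)^2 := by
    have := Finset.card_nsmul_le_sum Bad (fun x => (N x - m/q)^2) ((2/5 * m / q)^2) hpt
    simpa [nsmul_eq_mul] using this
  have hsub : ∑ x ∈ Bad, (N x - m/q)^2 ≤ ∑ x : Fin d → F, (N x - m/q)^2 :=
    Finset.sum_le_sum_of_subset_of_nonneg (Finset.subset_univ _)
      (fun _ _ _ => sq_nonneg _)
  have hvb : ∑ x : Fin d → F, (N x - m/q)^2 ≤ m * q^d / q := variance_bound A hα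
  have h : (Bad.card : ℝ) * (2/5 * m / q)^2 ≤ m * q^d / q := le_trans hlb (le_trans hsub hvb)
  have h3 := mul_le_mul_of_nonneg_right h (show (0:ℝ) ≤ 25*q^2/m by positivity)
  calc (Bad.card:ℝ) * (4*m) = ((Bad.card:ℝ) * (2/5 * m / q)^2) * (25*q^2/m) := by
        field_simp; ring
    _ ≤ (m*q^d/q) * (25*q^2/m) := h3
    _ = 25*q^d*q := by field_simp

lemma triple_count (A₁ A₂ A₃ : Finset (Fin d → F)) (α₁ α₂ : F) :
    (((A₁ ×ˢ A₂ ×ˢ A₃).filter fun p =>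
        dotp p.1 p.2.1 = α₁ ∧ dotp p.2.1 p.2.2 = α₂).card : ℝ)
      = ∑ x ∈ A₂, ((A₁.filter fun a => dotp a x = α₁).card : ℝ)
          * ((A₃.filter fun a => dotp a x = α₂).card : ℝ) := by
  rw [Finset.card_filter]
  push_cast
  rw [Finset.sum_product]
  have inner : ∀ x₁ : Fin d → F, ∑ p ∈ A₂ ×ˢ A₃,
      (if dotp x₁ p.1 = α₁ ∧ dotp p.1 p.2 = α₂ then (1:ℝ) else 0)
        = ∑ x₂ ∈ A₂, (if dotp x₁ x₂ = α₁ then (1:ℝ) else 0)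
            * ∑ x₃ ∈ A₃, (if dotp x₂ x₃ = α₂ then (1:ℝ) else 0) := by
    intro x₁
    rw [Finset.sum_product]
    refine Finset.sum_congr rfl fun x₂ _ => ?_
    rw [Finset.mul_sum]
    refine Finset.sum_congr rfl fun x₃ _ => ?_
    by_cases h1 : dotp x₁ x₂ = α₁ <;> by_cases h2 : dotp x₂ x₃ = α₂ <;> simp [h1, h2]
  rw [Finset.sum_congr rfl fun x₁ _ => inner x₁, Finset.sum_comm]
  refine Finset.sum_congr rfl fun x₂ _ => ?_
  rw [← Finset.sum_mul]
  congr 1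
  · rw [Finset.card_filter]
    push_cast
    refine Finset.sum_congr rfl fun a _ => ?_
    rw [dotp_comm]
  · rw [Finset.card_filter]
    push_cast
    refine Finset.sum_congr rfl fun a _ => ?_
    rw [dotp_comm]


/-- If `|A_1||A_2| ≥ 100 q^{d+1}` and `|A_2||A_3| ≥ 100 q^{d+1}`, then for all
`α_1, α_2 ∈ 𝔽_q^*` the number of triples `(x_1,x_2,x_3) ∈ A_1 × A_2 × A_3` with
`x_1·x_2 = α_1` and `x_2·x_3 = α_2` is at least `(1/4) q^{-2} |A_1||A_2||A_3|`; in
particular such a triple exists. -/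
theorem stmt14 (F : Type) [Field F] [Fintype F] [DecidableEq F] (d : ℕ) (hd : 1 ≤ d)
    (A₁ A₂ A₃ : Finset (Fin d → F))
    (h12 : 100 * (Fintype.card F : ℝ) ^ (d + 1) ≤ (A₁.card : ℝ) * (A₂.card : ℝ))
    (h23 : 100 * (Fintype.card F : ℝ) ^ (d + 1) ≤ (A₂.card : ℝ) * (A₃.card : ℝ))
    (α₁ α₂ : F) (hα₁ : α₁ ≠ 0) (hα₂ : α₂ ≠ 0) :
    (1 / 4 : ℝ) * ((Fintype.card F : ℝ) ^ 2)⁻¹ *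
        ((A₁.card : ℝ) * (A₂.card : ℝ) * (A₃.card : ℝ)) ≤
      (((A₁ ×ˢ A₂ ×ˢ A₃).filter fun p =>
        dotp p.1 p.2.1 = α₁ ∧ dotp p.2.1 p.2.2 = α₂).card : ℝ) ∧
    ∃ x₁ ∈ A₁, ∃ x₂ ∈ A₂, ∃ x₃ ∈ A₃, dotp x₁ x₂ = α₁ ∧ dotp x₂ x₃ = α₂ := by
  set q : ℝ := (Fintype.card F : ℝ) with hqdef
  have hq2 : (2:ℝ) ≤ q := by
    rw [hqdef]; exact_mod_cast Fintype.one_lt_card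
  have hq : (0:ℝ) < q := by linarith
  have hqd : (0:ℝ) < q^d := by positivity
  set a1 : ℝ := (A₁.card : ℝ) with ha1def
  set a2 : ℝ := (A₂.card : ℝ) with ha2def
  set a3 : ℝ := (A₃.card : ℝ) with ha3def
  have ha1n : (0:ℝ) ≤ a1 := Nat.cast_nonneg _
  have ha2n : (0:ℝ) ≤ a2 := Nat.cast_nonneg _
  have ha3n : (0:ℝ) ≤ a3 := Nat.cast_nonneg _
  have hcardle : ∀ A : Finset (Fin d → F), ((A.card : ℝ)) ≤ q^d := by
    intro A
    rw [hqdef]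
    have h1 := Finset.card_le_univ A
    have h2 : Fintype.card (Fin d → F) = Fintype.card F ^ d := by
      simp [Fintype.card_fun]
    rw [h2] at h1
    exact_mod_cast h1
  have hpow : q^(d+1) = q^d * q := pow_succ q d
  rw [hpow] at h12 h23
  have ha1 : 100 * q ≤ a1 := by
    have h := le_trans h12 (mul_le_mul_of_nonneg_left (hcardle A₂) ha1n)
    nlinarith [hqd]
  have ha2 : 100 * q ≤ a2 := by
    have h' : a1 * a2 ≤ q^d * a2 := mul_le_mul_of_nonneg_right (hcardle A₁) ha2n
    have h := le_trans h12 h'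
    nlinarith [hqd]
  have ha3 : 100 * q ≤ a3 := by
    have h' : a2 * a3 ≤ q^d * a3 := mul_le_mul_of_nonneg_right (hcardle A₂) ha3n
    have h := le_trans h23 h'
    nlinarith [hqd]
  have ha1pos : (0:ℝ) < a1 := by linarith
  have ha2pos : (0:ℝ) < a2 := by linarith
  have ha3pos : (0:ℝ) < a3 := by linarith
  -- nonzero-element counts
  have hfilter_ge : ∀ A : Finset (Fin d → F),
      ((A.card : ℝ)) - 1 ≤ ((A.filter fun a => a ≠ 0).card : ℝ) := by
    intro A
    have h1 : A.filter (fun a => a ≠ 0) = A.erase 0 := Finset.filter_ne' A 0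
    have h2 : A.card ≤ (A.erase 0).card + 1 := by
      by_cases h0 : (0 : Fin d → F) ∈ A
      · rw [Finset.card_erase_of_mem h0]; omega
      · rw [Finset.erase_eq_of_notMem h0]; omega
    rw [h1]
    have := (Nat.cast_le (α := ℝ)).mpr h2
    push_cast at this
    linarith
  have hfilter_le : ∀ A : Finset (Fin d → F),
      (((A.filter fun a => a ≠ 0).card : ℝ)) ≤ (A.card : ℝ) := by
    intro A; exact_mod_cast Finset.card_filter_le A _
  set m1 : ℝ := ((A₁.filter fun a => a ≠ 0).card : ℝ) with hm1def
  set m3 : ℝ := ((A₃.filter fun a => a ≠ 0).card : ℝ) with hm3def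
  have hm1' : 199/200 * a1 ≤ m1 := by
    have := hfilter_ge A₁; linarith
  have hm3' : 199/200 * a3 ≤ m3 := by
    have := hfilter_ge A₃; linarith
  have hm1pos : (0:ℝ) < m1 := by linarith
  have hm3pos : (0:ℝ) < m3 := by linarith
  -- bad sets
  set Bad1 := A₂.filter fun x =>
    ((A₁.filter fun a => dotp a x = α₁).card : ℝ) < 3/5 * m1 / q with hBad1def
  set Bad3 := A₂.filter fun x =>
    ((A₃.filter fun a => dotp a x = α₂).card : ℝ) < 3/5 * m3 / q with hBad3def
  have hb1 := bad_card A₁ A₂ hα₁ hm1pos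
  have hb3 := bad_card A₃ A₂ hα₂ hm3pos
  rw [← hqdef, ← hm1def, ← hBad1def] at hb1
  rw [← hqdef, ← hm3def, ← hBad3def] at hb3
  have hB1nn : (0:ℝ) ≤ (Bad1.card : ℝ) := Nat.cast_nonneg _
  have hB3nn : (0:ℝ) ≤ (Bad3.card : ℝ) := Nat.cast_nonneg _
  have hb1' : (Bad1.card : ℝ) ≤ 25/398 * a2 := by
    have s1 : (Bad1.card : ℝ) * (4 * (199/200 * a1)) ≤ (Bad1.card : ℝ) * (4 * m1) := by
      nlinarith [hB1nn, hm1']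
    have s2 : (Bad1.card : ℝ) * (4 * (199/200 * a1)) ≤ 25 * q^d * q := le_trans s1 hb1
    have s3 : 25 * q^d * q ≤ 1/4 * (a1 * a2) := by linarith
    nlinarith [ha1pos]
  have hb3' : (Bad3.card : ℝ) ≤ 25/398 * a2 := by
    have s1 : (Bad3.card : ℝ) * (4 * (199/200 * a3)) ≤ (Bad3.card : ℝ) * (4 * m3) := by
      nlinarith [hB3nn, hm3']
    have s2 : (Bad3.card : ℝ) * (4 * (199/200 * a3)) ≤ 25 * q^d * q := le_trans s1 hb3
    have s3 : 25 * q^d * q ≤ 1/4 * (a2 * a3) := by linarith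
    nlinarith [ha3pos]
  -- good set
  set Good := A₂ \ (Bad1 ∪ Bad3) with hGooddef
  have hGsub : Good ⊆ A₂ := Finset.sdiff_subset
  have hGcard : 348/398 * a2 ≤ (Good.card : ℝ) := by
    have hsub : A₂ ⊆ Good ∪ (Bad1 ∪ Bad3) := by
      intro x hx
      rw [Finset.mem_union, hGooddef, Finset.mem_sdiff]
      by_cases h : x ∈ Bad1 ∪ Bad3
      · exact Or.inr h
      · exact Or.inl ⟨hx, h⟩
    have h1 : A₂.card ≤ Good.card + (Bad1 ∪ Bad3).card :=
      le_trans (Finset.card_le_card hsub) (Finset.card_union_le _ _)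
    have h2 : (Bad1 ∪ Bad3).card ≤ Bad1.card + Bad3.card := Finset.card_union_le _ _
    have h3 : A₂.card ≤ Good.card + Bad1.card + Bad3.card := by omega
    have h4 := (Nat.cast_le (α := ℝ)).mpr h3
    push_cast at h4
    linarith
  have hGnn : (0:ℝ) ≤ (Good.card : ℝ) := Nat.cast_nonneg _
  -- pointwise bounds on good set
  have hGoodpt : ∀ x ∈ Good,
      3/5 * m1 / q ≤ ((A₁.filter fun a => dotp a x = α₁).card : ℝ)
        ∧ 3/5 * m3 / q ≤ ((A₃.filter fun a => dotp a x = α₂).card : ℝ) := by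
    intro x hx
    rw [hGooddef, Finset.mem_sdiff, Finset.mem_union] at hx
    obtain ⟨hxA2, hxn⟩ := hx
    push_neg at hxn
    obtain ⟨hn1, hn3⟩ := hxn
    rw [hBad1def, Finset.mem_filter] at hn1
    rw [hBad3def, Finset.mem_filter] at hn3
    constructor
    · by_contra hc; push_neg at hc; exact hn1 ⟨hxA2, hc⟩
    · by_contra hc; push_neg at hc; exact hn3 ⟨hxA2, hc⟩
  -- main sum bound
  have hl1 : (0:ℝ) ≤ 3/5 * m1 / q := div_nonneg (by linarith) (le_of_lt hq)
  have hl3 : (0:ℝ) ≤ 3/5 * m3 / q := div_nonneg (by linarith) (le_of_lt hq)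
  have hsum1 : (Good.card : ℝ) * ((3/5 * m1 / q) * (3/5 * m3 / q))
      ≤ ∑ x ∈ Good, ((A₁.filter fun a => dotp a x = α₁).card : ℝ)
          * ((A₃.filter fun a => dotp a x = α₂).card : ℝ) := by
    have := Finset.card_nsmul_le_sum Good
      (fun x => ((A₁.filter fun a => dotp a x = α₁).card : ℝ)
          * ((A₃.filter fun a => dotp a x = α₂).card : ℝ))
      ((3/5 * m1 / q) * (3/5 * m3 / q))
      (fun x hx => mul_le_mul (hGoodpt x hx).1 (hGoodpt x hx).2 hl3 (Nat.cast_nonneg _))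
    simpa [nsmul_eq_mul] using this
  have hsum2 : ∑ x ∈ Good, ((A₁.filter fun a => dotp a x = α₁).card : ℝ)
          * ((A₃.filter fun a => dotp a x = α₂).card : ℝ)
      ≤ ∑ x ∈ A₂, ((A₁.filter fun a => dotp a x = α₁).card : ℝ)
          * ((A₃.filter fun a => dotp a x = α₂).card : ℝ) :=
    Finset.sum_le_sum_of_subset_of_nonneg hGsub
      (fun x _ _ => mul_nonneg (Nat.cast_nonneg _) (Nat.cast_nonneg _))
  -- combine
  have hchain : 1/4 * (a1 * a2 * a3) ≤ (Good.card : ℝ) * ((9/25) * (m1 * m3)) := by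
    have hstep : (348/398 * a2) * ((199/200 * a1) * (199/200 * a3))
        ≤ (Good.card : ℝ) * (m1 * m3) := by
      apply mul_le_mul hGcard
      · apply mul_le_mul hm1' hm3' (by linarith) (by linarith)
      · exact mul_nonneg (by linarith) (by linarith)
      · exact hGnn
    nlinarith [hstep, mul_pos (mul_pos ha1pos ha2pos) ha3pos]
  have hident : (Good.card : ℝ) * ((3/5 * m1 / q) * (3/5 * m3 / q))
      = (Good.card : ℝ) * ((9/25) * (m1 * m3)) * (q^2)⁻¹ := by
    field_simp
    ring
  have hfinal : (1/4 : ℝ) * (q^2)⁻¹ * (a1 * a2 * a3)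
      ≤ ∑ x ∈ A₂, ((A₁.filter fun a => dotp a x = α₁).card : ℝ)
          * ((A₃.filter fun a => dotp a x = α₂).card : ℝ) := by
    have hinv : (0:ℝ) ≤ (q^2)⁻¹ := by positivity
    have := mul_le_mul_of_nonneg_right hchain hinv
    calc (1/4 : ℝ) * (q^2)⁻¹ * (a1 * a2 * a3)
        = 1/4 * (a1 * a2 * a3) * (q^2)⁻¹ := by ring
      _ ≤ (Good.card : ℝ) * ((9/25) * (m1 * m3)) * (q^2)⁻¹ := this
      _ = (Good.card : ℝ) * ((3/5 * m1 / q) * (3/5 * m3 / q)) := hident.symm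
      _ ≤ _ := le_trans hsum1 hsum2
  have hTC := triple_count A₁ A₂ A₃ α₁ α₂
  have hmain : (1 / 4 : ℝ) * (q ^ 2)⁻¹ * (a1 * a2 * a3)
      ≤ (((A₁ ×ˢ A₂ ×ˢ A₃).filter fun p =>
          dotp p.1 p.2.1 = α₁ ∧ dotp p.2.1 p.2.2 = α₂).card : ℝ) := by
    rw [hTC]
    exact hfinal
  refine ⟨hmain, ?_⟩
  have hpos : 0 < (((A₁ ×ˢ A₂ ×ˢ A₃).filter fun p =>
      dotp p.1 p.2.1 = α₁ ∧ dotp p.2.1 p.2.2 = α₂).card : ℝ) := by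
    have h3 := mul_pos (mul_pos ha1pos ha2pos) ha3pos
    have h4 : (0:ℝ) < (1 / 4 : ℝ) * (q ^ 2)⁻¹ * (a1 * a2 * a3) :=
      mul_pos (mul_pos (by norm_num) (inv_pos.mpr (pow_pos hq 2))) h3
    linarith
  have hne : ((A₁ ×ˢ A₂ ×ˢ A₃).filter fun p =>
      dotp p.1 p.2.1 = α₁ ∧ dotp p.2.1 p.2.2 = α₂).Nonempty := by
    rw [← Finset.card_pos]
    exact_mod_cast hpos
  obtain ⟨p, hp⟩ := hne
  rw [Finset.mem_filter] at hp
  obtain ⟨hmem, hP⟩ := hp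
  rw [Finset.mem_product] at hmem
  obtain ⟨h1, hmem2⟩ := hmem
  rw [Finset.mem_product] at hmem2
  exact ⟨p.1, h1, p.2.1, hmem2.1, p.2.2, hmem2.2, hP.1, hP.2⟩
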